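/- Every path from u_0 to w_{N−1} in the max-plus gadget graph H with total weight strictly less than 15W equals, for some ℓ ∈ {1,…,M} and i, j, k ∈ {0,…,N−1}, the path with vertex sequence u_0, u_1, …, u_i, x_ℓ, v_j, v_{j−1}, …, v_0, w_k, w_{k+1}, …, w_{N−1}. -/

import Mathlib

/-- Vertex set of the max-plus gadget graph: `U ⊕ V ⊕ W ⊕ X`. -/
abbrev MPVert (N M : ℕ) := (Fin N ⊕ Fin N) ⊕ (Fin N ⊕ Fin M)

/-- Vertex `u_i`. -/
def vu (N M : ℕ) (i : Fin N) : MPVert N M := Sum.inl (Sum.inl i)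
/-- Vertex `v_j`. -/
def vv (N M : ℕ) (j : Fin N) : MPVert N M := Sum.inl (Sum.inr j)
/-- Vertex `w_k`. -/
def vw (N M : ℕ) (k : Fin N) : MPVert N M := Sum.inr (Sum.inl k)
/-- Vertex `x_ℓ`. -/
def vx (N M : ℕ) (l : Fin M) : MPVert N M := Sum.inr (Sum.inr l)

/-- Adjacency (as a `Bool`) of the max-plus gadget graph. -/
def mpAdjB (N M : ℕ) : MPVert N M → MPVert N M → Bool
  | Sum.inl (Sum.inl i), Sum.inl (Sum.inl i') => i.val + 1 == i'.val || i'.val + 1 == i.val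
  | Sum.inl (Sum.inr j), Sum.inl (Sum.inr j') => j.val + 1 == j'.val || j'.val + 1 == j.val
  | Sum.inr (Sum.inl k), Sum.inr (Sum.inl k') => k.val + 1 == k'.val || k'.val + 1 == k.val
  | Sum.inl (Sum.inl _), Sum.inr (Sum.inr _) => true
  | Sum.inr (Sum.inr _), Sum.inl (Sum.inl _) => true
  | Sum.inr (Sum.inr _), Sum.inl (Sum.inr _) => true
  | Sum.inl (Sum.inr _), Sum.inr (Sum.inr _) => true
  | Sum.inl (Sum.inr j), Sum.inr (Sum.inl _) => j.val == 0
  | Sum.inr (Sum.inl _), Sum.inl (Sum.inr j) => j.val == 0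
  | _, _ => false

/-- The max-plus gadget graph. -/
def mpGraph (N M : ℕ) : SimpleGraph (MPVert N M) where
  Adj x y := mpAdjB N M x y = true
  symm := by
    constructor
    rintro ((i | j) | (k | l)) ((i' | j') | (k' | l')) h <;>
      simp_all [mpAdjB] <;> omega
  loopless := by
    constructor
    rintro ((i | j) | (k | l)) h <;> simp_all [mpAdjB]

/-- The edge weights of the max-plus gadget graph. -/
def mpW (N M : ℕ) (W : ℤ) (a b : Fin M → Fin N → ℤ) (c : Fin N → ℤ) :
    MPVert N M → MPVert N M → ℤ
  | Sum.inl (Sum.inl i), Sum.inr (Sum.inr l) => 5 * W - a l i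
  | Sum.inr (Sum.inr l), Sum.inl (Sum.inl i) => 5 * W - a l i
  | Sum.inr (Sum.inr l), Sum.inl (Sum.inr j) => 5 * W - b l j
  | Sum.inl (Sum.inr j), Sum.inr (Sum.inr l) => 5 * W - b l j
  | Sum.inl (Sum.inr _), Sum.inr (Sum.inl k) => 5 * W + c k
  | Sum.inr (Sum.inl k), Sum.inl (Sum.inr _) => 5 * W + c k
  | _, _ => 0

/-- The total weight of a walk: the sum of the weights of its edges, with multiplicity. -/
def walkWeight {V : Type*} {G : SimpleGraph V} (w : V → V → ℤ) {s t : V}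
    (p : G.Walk s t) : ℤ :=
  (p.darts.map fun d => w d.toProd.1 d.toProd.2).sum



namespace MPaux

-- drop of finRange as cons
lemma dropFin {n m : ℕ} (h : m < n) :
    (List.finRange n).drop m = ⟨m, h⟩ :: (List.finRange n).drop (m+1) := by
  rw [List.drop_eq_getElem_cons (by simpa using h)]
  simp

-- membership in drop of finRange
lemma mem_dropFin {n m : ℕ} (i : Fin n) (h : m ≤ i.val) :
    i ∈ (List.finRange n).drop m := by
  have hlen : i.val - m < ((List.finRange n).drop m).length := by
    simp; omega
  have h2 : ((List.finRange n).drop m)[i.val - m] = i := by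
    rw [List.getElem_drop, List.getElem_finRange]; ext; simp; omega
  exact h2 ▸ List.getElem_mem hlen

-- cons decomposition of drop m (take (k+1) finRange)
lemma dt_cons {n m k : ℕ} (hmk : m ≤ k) (hk : k < n) :
    ((List.finRange n).take (k+1)).drop m
      = ⟨m, by omega⟩ :: ((List.finRange n).take (k+1)).drop (m+1) := by
  rw [List.drop_eq_getElem_cons (by simp; omega)]
  congr 1
  rw [List.getElem_take]
  simp

lemma dt_nil {n k : ℕ} : ((List.finRange n).take (k+1)).drop (k+1) = [] := by
  apply List.drop_eq_nil_of_le
  simp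

-- membership in drop m (take (k+1) finRange)
lemma mem_dt {n m k : ℕ} (i : Fin n) (h1 : m ≤ i.val) (h2 : i.val ≤ k) :
    i ∈ ((List.finRange n).take (k+1)).drop m := by
  have hlen : i.val - m < (((List.finRange n).take (k+1)).drop m).length := by
    simp; omega
  have h2 : (((List.finRange n).take (k+1)).drop m)[i.val - m] = i := by
    rw [List.getElem_drop, List.getElem_take, List.getElem_finRange]; ext; simp; omega
  exact h2 ▸ List.getElem_mem hlen

-- take (m+1) = take m ++ [⟨m⟩]
lemma take_succ_fin {n m : ℕ} (h : m < n) :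
    (List.finRange n).take (m+1) = (List.finRange n).take m ++ [⟨m, h⟩] := by
  rw [List.take_succ]
  congr 1
  rw [List.getElem?_eq_getElem (by simpa using h)]
  simp

-- membership in take (k+1) finRange
lemma mem_take {n k : ℕ} (i : Fin n) (h : i.val ≤ k) :
    i ∈ (List.finRange n).take (k+1) := by
  have := mem_dt i (Nat.zero_le _) h
  rwa [List.drop_zero] at this

-- prepend on the descending segment
lemma desc_prepend {n m' i : ℕ} (hi : i ≤ m') (hm : m' + 1 < n) :
    (((List.finRange n).take (m'+1+1)).drop i).reverse
      = ⟨m'+1, hm⟩ :: (((List.finRange n).take (m'+1)).drop i).reverse := by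
  rw [take_succ_fin hm, List.drop_append_of_le_length (by simp; omega),
    List.reverse_append]
  simp

-- singleton segment
lemma dt_singleton {n k : ℕ} (hk : k < n) :
    ((List.finRange n).take (k+1)).drop k = [⟨k, hk⟩] := by
  rw [dt_cons (le_refl k) hk, dt_nil]

end MPaux

namespace MP

variable {N M : ℕ} {W : ℤ} {a b : Fin M → Fin N → ℤ} {c : Fin N → ℤ}

lemma walkWeight_cons {s y t : MPVert N M} (h : (mpGraph N M).Adj s y)
    (q : (mpGraph N M).Walk y t) :
    walkWeight (mpW N M W a b c) (SimpleGraph.Walk.cons h q)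
      = mpW N M W a b c s y + walkWeight (mpW N M W a b c) q := by
  simp [walkWeight]

lemma walkWeight_nil {s : MPVert N M} :
    walkWeight (mpW N M W a b c) (SimpleGraph.Walk.nil (G := mpGraph N M) (u := s)) = 0 := by
  simp [walkWeight]

/-- Lower-bound potential. -/
def lbF (W : ℤ) : MPVert N M → ℤ
  | .inl (.inl _) => 13*W
  | .inl (.inr _) => 5*W
  | .inr (.inl _) => 0
  | .inr (.inr _) => 9*W

lemma lb_walk (hW : 1 ≤ W)
    (ha : ∀ l i, 0 ≤ a l i ∧ a l i ≤ W) (hb : ∀ l j, 0 ≤ b l j ∧ b l j ≤ W)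
    (hc : ∀ k, 0 ≤ c k ∧ c k ≤ W) {t : MPVert N M} (ht : lbF W t = 0) {s : MPVert N M}
    (q : (mpGraph N M).Walk s t) :
    lbF W s ≤ walkWeight (mpW N M W a b c) q := by
  induction q with
  | nil => simp [walkWeight, ht]
  | @cons s y _ h q ih =>
    rw [walkWeight_cons]
    have hadj : mpAdjB N M s y = true := h
    have hstep : lbF W s ≤ mpW N M W a b c s y + lbF W y := by
      clear ih h q
      rcases s with ((i|j)|(k|l)) <;> rcases y with ((i'|j')|(k'|l')) <;>
        simp_all [mpAdjB, mpW, lbF] <;>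
        first
          | linarith [(ha l' i).1, (ha l' i).2]
          | linarith [(ha l i').1, (ha l i').2]
          | linarith [(hb l' j).1, (hb l' j).2]
          | linarith [(hb l j').1, (hb l j').2]
          | linarith [(hc k').1, (hc k').2]
          | linarith [(hc k).1, (hc k).2]
    linarith [ih ht]

lemma mpW_nonneg (hW : 1 ≤ W)
    (ha : ∀ l i, 0 ≤ a l i ∧ a l i ≤ W) (hb : ∀ l j, 0 ≤ b l j ∧ b l j ≤ W)
    (hc : ∀ k, 0 ≤ c k ∧ c k ≤ W) (x y : MPVert N M) :
    0 ≤ mpW N M W a b c x y := by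
  rcases x with ((i|j)|(k|l)) <;> rcases y with ((i'|j')|(k'|l')) <;>
    simp [mpW] <;>
    first
      | linarith [(ha l' i).1, (ha l' i).2]
      | linarith [(ha l i').1, (ha l i').2]
      | linarith [(hb l' j).1, (hb l' j).2]
      | linarith [(hb l j').1, (hb l j').2]
      | linarith [(hc k').1, (hc k').2]
      | linarith [(hc k).1, (hc k).2]

lemma phaseW (hN : 0 < N) (hW : 1 ≤ W)
    (ha : ∀ l i, 0 ≤ a l i ∧ a l i ≤ W) (hb : ∀ l j, 0 ≤ b l j ∧ b l j ≤ W)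
    (hc : ∀ k, 0 ≤ c k ∧ c k ≤ W) {s tt : MPVert N M}
    (htt : tt = vw N M ⟨N-1, by omega⟩)
    (q : (mpGraph N M).Walk s tt) :
    q.IsPath → ∀ k : Fin N, s = vw N M k →
      walkWeight (mpW N M W a b c) q < 10*W →
      q.support = ((List.finRange N).drop k.val).map (vw N M) := by
  induction q with
  | nil =>
    intro _ k hk _
    subst htt
    have hk' : k = ⟨N-1, by omega⟩ := by
      simp [vw] at hk; exact hk.symm
    subst hk'
    rw [MPaux.dropFin (show N-1 < N by omega)]
    rw [show (List.finRange N).drop (N-1+1) = [] from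
      List.drop_eq_nil_of_le (by simp; omega)]
    simp
  | @cons s y _ h q ih =>
    intro hp k hk hw
    subst hk
    rw [SimpleGraph.Walk.cons_isPath_iff] at hp
    have hadj : mpAdjB N M (vw N M k) y = true := h
    rw [walkWeight_cons] at hw
    rcases y with ((i'|j')|(k'|l'))
    · simp [mpAdjB, vw] at hadj
    · -- w → v : too heavy
      exfalso
      have hlb : (5:ℤ)*W ≤ walkWeight (mpW N M W a b c) q :=
        lb_walk hW ha hb hc (by subst htt; simp [lbF, vw]) q
      have hcw : mpW N M W a b c (vw N M k) (Sum.inl (Sum.inr j')) = 5*W + c k := by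
        simp [mpW, vw]
      rw [hcw] at hw
      linarith [(hc k).1]
    · -- w → w chain
      simp only [mpAdjB, vw] at hadj
      have hch : k.val + 1 = k'.val ∨ k'.val + 1 = k.val := by
        simpa using hadj
      have hq := ih htt hp.1 k' rfl (by
        have := mpW_nonneg (W := W) (a := a) (b := b) (c := c) hW ha hb hc
          (vw N M k) (Sum.inr (Sum.inl k'))
        linarith)
      rcases hch with hup | hdown
      · rw [SimpleGraph.Walk.support_cons, hq,
          MPaux.dropFin (show k.val < N from k.isLt)]
        simp [vw, hup]
      · exfalso
        exact hp.2 (hq ▸ List.mem_map_of_mem (f := vw N M)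
          (MPaux.mem_dropFin k (by omega)))
    · simp [mpAdjB, vw] at hadj

lemma phaseV (hN : 0 < N) (hW : 1 ≤ W)
    (ha : ∀ l i, 0 ≤ a l i ∧ a l i ≤ W) (hb : ∀ l j, 0 ≤ b l j ∧ b l j ≤ W)
    (hc : ∀ k, 0 ≤ c k ∧ c k ≤ W) {s tt : MPVert N M}
    (htt : tt = vw N M ⟨N-1, by omega⟩)
    (q : (mpGraph N M).Walk s tt) :
    q.IsPath → ∀ j : Fin N, s = vv N M j →
      walkWeight (mpW N M W a b c) q < 9*W →
      ∃ k : Fin N, q.support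
        = (((List.finRange N).take (j.val + 1)).reverse).map (vv N M) ++
          ((List.finRange N).drop k.val).map (vw N M) := by
  induction q with
  | nil =>
    intro _ j hj _
    subst htt
    simp [vv, vw] at hj
  | @cons s y _ h q ih =>
    intro hp j hj hw
    subst hj
    rw [SimpleGraph.Walk.cons_isPath_iff] at hp
    have hadj : mpAdjB N M (vv N M j) y = true := h
    rw [walkWeight_cons] at hw
    rcases y with ((i'|j')|(k'|l'))
    · simp [mpAdjB, vv] at hadj
    · -- v → v chain
      simp only [mpAdjB, vv] at hadj
      have hch : j.val + 1 = j'.val ∨ j'.val + 1 = j.val := by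
        simpa using hadj
      have hq := ih htt hp.1 j' rfl (by
        have := mpW_nonneg (W := W) (a := a) (b := b) (c := c) hW ha hb hc
          (vv N M j) (Sum.inl (Sum.inr j'))
        linarith)
      obtain ⟨k, hq⟩ := hq
      rcases hch with hup | hdown
      · exfalso
        refine hp.2 (hq ▸ ?_)
        refine List.mem_append_left _ (List.mem_map_of_mem (f := vv N M) ?_)
        rw [List.mem_reverse]
        exact MPaux.mem_take j (by omega)
      · refine ⟨k, ?_⟩
        rw [SimpleGraph.Walk.support_cons, hq,
          MPaux.take_succ_fin (show j.val < N from j.isLt)]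
        rw [show j'.val + 1 = j.val from hdown]
        simp [vv]
    · -- v → w : j = 0
      simp only [mpAdjB, vv] at hadj
      have hj0 : j.val = 0 := by simpa using hadj
      have hcw : mpW N M W a b c (vv N M j) (Sum.inr (Sum.inl k')) = 5*W + c k' := by
        simp [mpW, vv]
      rw [hcw] at hw
      have hq := phaseW hN hW ha hb hc htt q hp.1 k' rfl (by linarith [(hc k').1])
      have hjeq : j = ⟨0, hN⟩ := Fin.ext hj0
      subst hjeq
      refine ⟨k', ?_⟩
      rw [SimpleGraph.Walk.support_cons, hq]
      have h0 : ((List.finRange N).take (0 + 1)).reverse = [(⟨0, hN⟩ : Fin N)] := by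
        rw [MPaux.take_succ_fin (show 0 < N from hN), List.take_zero]
        simp
      simp only [h0]
      simp [vw, vv]
    · -- v → x : too heavy
      exfalso
      have hlb : (9:ℤ)*W ≤ walkWeight (mpW N M W a b c) q :=
        lb_walk hW ha hb hc (by subst htt; simp [lbF, vw]) q
      have hcw : mpW N M W a b c (vv N M j) (Sum.inr (Sum.inr l')) = 5*W - b l' j := by
        simp [mpW, vv]
      rw [hcw] at hw
      linarith [(hb l' j).2]

lemma phaseX (hN : 0 < N) (hW : 1 ≤ W)
    (ha : ∀ l i, 0 ≤ a l i ∧ a l i ≤ W) (hb : ∀ l j, 0 ≤ b l j ∧ b l j ≤ W)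
    (hc : ∀ k, 0 ≤ c k ∧ c k ≤ W) {s tt : MPVert N M}
    (htt : tt = vw N M ⟨N-1, by omega⟩)
    (q : (mpGraph N M).Walk s tt) :
    q.IsPath → ∀ l : Fin M, s = vx N M l →
      walkWeight (mpW N M W a b c) q < 13*W →
      ∃ (j k : Fin N), q.support
        = vx N M l :: ((((List.finRange N).take (j.val + 1)).reverse).map (vv N M) ++
          ((List.finRange N).drop k.val).map (vw N M)) := by
  induction q with
  | nil =>
    intro _ l hl _
    subst htt
    simp [vx, vw] at hl
  | @cons s y _ h q ih =>
    intro hp l hl hw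
    subst hl
    rw [SimpleGraph.Walk.cons_isPath_iff] at hp
    have hadj : mpAdjB N M (vx N M l) y = true := h
    rw [walkWeight_cons] at hw
    rcases y with ((i'|j')|(k'|l'))
    · -- x → u : too heavy
      exfalso
      have hlb : (13:ℤ)*W ≤ walkWeight (mpW N M W a b c) q :=
        lb_walk hW ha hb hc (by subst htt; simp [lbF, vw]) q
      have hcw : mpW N M W a b c (vx N M l) (Sum.inl (Sum.inl i')) = 5*W - a l i' := by
        simp [mpW, vx]
      rw [hcw] at hw
      linarith [(ha l i').2]
    · -- x → v
      have hcw : mpW N M W a b c (vx N M l) (Sum.inl (Sum.inr j')) = 5*W - b l j' := by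
        simp [mpW, vx]
      rw [hcw] at hw
      obtain ⟨k, hq⟩ := phaseV hN hW ha hb hc htt q hp.1 j' rfl
        (by linarith [(hb l j').2])
      exact ⟨j', k, by rw [SimpleGraph.Walk.support_cons, hq]⟩
    · simp [mpAdjB, vx] at hadj
    · simp [mpAdjB, vx] at hadj

lemma phaseU (hN : 0 < N) (hW : 1 ≤ W)
    (ha : ∀ l i, 0 ≤ a l i ∧ a l i ≤ W) (hb : ∀ l j, 0 ≤ b l j ∧ b l j ≤ W)
    (hc : ∀ k, 0 ≤ c k ∧ c k ≤ W) {s tt : MPVert N M}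
    (htt : tt = vw N M ⟨N-1, by omega⟩)
    (q : (mpGraph N M).Walk s tt) :
    q.IsPath → ∀ m : Fin N, s = vu N M m →
      walkWeight (mpW N M W a b c) q < 15*W →
      ∃ (l : Fin M) (i j k : Fin N),
        (m.val ≤ i.val ∧ q.support
          = ((((List.finRange N).take (i.val + 1)).drop m.val).map (vu N M)) ++ [vx N M l] ++
            (((List.finRange N).take (j.val + 1)).reverse).map (vv N M) ++
            ((List.finRange N).drop k.val).map (vw N M))
        ∨ (i.val ≤ m.val ∧ q.support
          = (((((List.finRange N).take (m.val + 1)).drop i.val).reverse).map (vu N M)) ++ [vx N M l] ++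
            (((List.finRange N).take (j.val + 1)).reverse).map (vv N M) ++
            ((List.finRange N).drop k.val).map (vw N M)) := by
  induction q with
  | nil =>
    intro _ m hm _
    subst htt
    simp [vu, vw] at hm
  | @cons s y _ h q ih =>
    intro hp m hm hw
    subst hm
    rw [SimpleGraph.Walk.cons_isPath_iff] at hp
    have hadj : mpAdjB N M (vu N M m) y = true := h
    rw [walkWeight_cons] at hw
    rcases y with ((i'|j')|(k'|l'))
    · -- u → u chain
      simp only [mpAdjB, vu] at hadj
      have hch : m.val + 1 = i'.val ∨ i'.val + 1 = m.val := by
        simpa using hadj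
      obtain ⟨l, i, j, k, hq⟩ := ih htt hp.1 i' rfl (by
        have := mpW_nonneg (W := W) (a := a) (b := b) (c := c) hW ha hb hc
          (vu N M m) (Sum.inl (Sum.inl i'))
        linarith)
      rcases hch with hupc | hdown
      · -- went up to m+1
        rcases hq with ⟨hii, hsup⟩ | ⟨hii, hsup⟩
        · -- asc from i' to i
          refine ⟨l, i, j, k, Or.inl ⟨by omega, ?_⟩⟩
          rw [show i'.val = m.val + 1 from hupc.symm] at hsup
          rw [SimpleGraph.Walk.support_cons, hsup,
            MPaux.dt_cons (show m.val ≤ i.val by omega) i.isLt]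
          simp [vu]
        · -- desc from i' down to i
          by_cases hile : i.val ≤ m.val
          · exfalso
            refine hp.2 (hsup ▸ ?_)
            refine List.mem_append_left _ (List.mem_append_left _
              (List.mem_append_left _ (List.mem_map_of_mem (f := vu N M) ?_)))
            rw [List.mem_reverse]
            exact MPaux.mem_dt m hile (by omega)
          · have hie : i = i' := Fin.ext (by omega)
            subst hie
            rw [MPaux.dt_singleton i.isLt] at hsup
            have hseg2 : ((List.finRange N).take (i.val+1)).drop (m.val+1) = [i] := by
              rw [show m.val + 1 = i.val from by omega, MPaux.dt_singleton i.isLt]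
            refine ⟨l, i, j, k, Or.inl ⟨by omega, ?_⟩⟩
            rw [SimpleGraph.Walk.support_cons, hsup,
              MPaux.dt_cons (show m.val ≤ i.val by omega) i.isLt, hseg2]
            simp [vu]
      · -- went down to m-1
        have hmlt := m.isLt
        rcases hq with ⟨hii, hsup⟩ | ⟨hii, hsup⟩
        · -- asc from i' up to i
          by_cases hile : m.val ≤ i.val
          · exfalso
            refine hp.2 (hsup ▸ ?_)
            refine List.mem_append_left _ (List.mem_append_left _
              (List.mem_append_left _ (List.mem_map_of_mem (f := vu N M) ?_)))
            exact MPaux.mem_dt m (by omega) hile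
          · have hie : i = i' := Fin.ext (by omega)
            subst hie
            rw [MPaux.dt_singleton i.isLt] at hsup
            refine ⟨l, i, j, k, Or.inr ⟨by omega, ?_⟩⟩
            rw [SimpleGraph.Walk.support_cons, hsup,
              show m.val = i.val + 1 from by omega,
              MPaux.desc_prepend (le_refl i.val) (by omega),
              MPaux.dt_singleton i.isLt]
            simp [vu, Fin.ext_iff]
            omega
        · -- desc from i' down to i
          refine ⟨l, i, j, k, Or.inr ⟨by omega, ?_⟩⟩
          rw [SimpleGraph.Walk.support_cons, hsup,
            show m.val = i'.val + 1 from hdown.symm,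
            MPaux.desc_prepend hii (by omega)]
          simp [vu, Fin.ext_iff]
          omega
    · simp [mpAdjB, vu] at hadj
    · simp [mpAdjB, vu] at hadj
    · -- u → x
      have hcw : mpW N M W a b c (vu N M m) (Sum.inr (Sum.inr l')) = 5*W - a l' m := by
        simp [mpW, vu]
      rw [hcw] at hw
      obtain ⟨j, k, hq⟩ := phaseX hN hW ha hb hc htt q hp.1 l' rfl
        (by linarith [(ha l' m).2])
      refine ⟨l', m, j, k, Or.inl ⟨le_refl _, ?_⟩⟩
      rw [SimpleGraph.Walk.support_cons, hq, MPaux.dt_singleton m.isLt]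
      simp [vu, vx]


end MP

/-- Every path from `u_0` to `w_{N−1}` in the max-plus gadget graph with
total weight strictly less than `15W` has vertex sequence
`u_0, …, u_i, x_ℓ, v_j, v_{j−1}, …, v_0, w_k, …, w_{N−1}` for some `ℓ, i, j, k`. -/
theorem stmt10 (N M : ℕ) (hN : 1 ≤ N) (hM : 1 ≤ M) (W : ℤ) (hW : 1 ≤ W)
    (a b : Fin M → Fin N → ℤ) (c : Fin N → ℤ)
    (ha : ∀ l i, 0 ≤ a l i ∧ a l i ≤ W) (hb : ∀ l j, 0 ≤ b l j ∧ b l j ≤ W)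
    (hc : ∀ k, 0 ≤ c k ∧ c k ≤ W)
    (p : (mpGraph N M).Walk (vu N M ⟨0, by omega⟩) (vw N M ⟨N - 1, by omega⟩))
    (hpath : p.IsPath) (hweight : walkWeight (mpW N M W a b c) p < 15 * W) :
    ∃ (l : Fin M) (i j k : Fin N),
      p.support = ((List.finRange N).take (i.val + 1)).map (vu N M) ++ [vx N M l] ++
        (((List.finRange N).take (j.val + 1)).reverse).map (vv N M) ++
        ((List.finRange N).drop k.val).map (vw N M) := by
  have h0 : (0:ℕ) < N := hN
  obtain ⟨l, i, j, k, hq⟩ :=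
    MP.phaseU h0 hW ha hb hc rfl p hpath ⟨0, by omega⟩ rfl hweight
  have hseg : ((List.finRange N).take (0+1)) = [⟨0, h0⟩] := by
    rw [MPaux.take_succ_fin h0, List.take_zero, List.nil_append]
  rcases hq with ⟨_, hsup⟩ | ⟨hii, hsup⟩
  · exact ⟨l, i, j, k, by rw [hsup, List.drop_zero]⟩
  · refine ⟨l, ⟨0, h0⟩, j, k, ?_⟩
    have hi0 : i.val = 0 := Nat.le_zero.mp (by simpa using hii)
    simp only [Fin.val_mk] at hsup
    rw [hi0, List.drop_zero, hseg] at hsup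
    rw [hsup]
    simp only [Fin.val_mk, hseg]
    simp
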